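/- Under the same bipartite magic gauge, if exactly one of the two logicals (say Z̄) has a representative supported on A while Ȳ does not, the reduced state is σ_A = 2^{-|A|}(I_A + Z̄_A/√2) ∏_{i=1}^k (I_A + a_i), and M̃₂(σ_A) = log₂(6/5). -/

import Mathlib

open Matrix BigOperators Finset

/-- The four single-qubit Pauli matrices `I, X, Y, Z`. -/
noncomputable def pauli1 : Fin 4 → Matrix (Fin 2) (Fin 2) ℂ :=
  ![(1 : Matrix (Fin 2) (Fin 2) ℂ),
    !![0, 1; 1, 0],
    !![0, -Complex.I; Complex.I, 0],
    !![1, 0; 0, -1]]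

/-- The `n`-qubit Pauli string `⨂ₖ pauli1 (s k)` as a matrix on `(Fin n → Fin 2)`. -/
noncomputable def pauliString {n : ℕ} (s : Fin n → Fin 4) :
    Matrix (Fin n → Fin 2) (Fin n → Fin 2) ℂ :=
  Matrix.of fun i j => ∏ k, pauli1 (s k) (i k) (j k)

/-- `M` is a Pauli operator with phase `±1`. -/
def IsPauliPM {n : ℕ} (M : Matrix (Fin n → Fin 2) (Fin n → Fin 2) ℂ) : Prop :=
  ∃ (ε : ℂ) (s : Fin n → Fin 4), (ε = 1 ∨ ε = -1) ∧ M = ε • pauliString s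

/-- `M` is a `±1`-phase Pauli operator whose support is contained in `A`. -/
def SuppIn {n : ℕ} (A : Finset (Fin n)) (M : Matrix (Fin n → Fin 2) (Fin n → Fin 2) ℂ) : Prop :=
  ∃ (ε : ℂ) (s : Fin n → Fin 4), (ε = 1 ∨ ε = -1) ∧ M = ε • pauliString s ∧
    ∀ k ∉ A, s k = 0

/-- The element `∏_{i : f i} g i` of the group generated by the (commuting) `g i`. -/
noncomputable def grpElem {n m : ℕ} (g : Fin m → Matrix (Fin n → Fin 2) (Fin n → Fin 2) ℂ)
    (f : Fin m → Bool) : Matrix (Fin n → Fin 2) (Fin n → Fin 2) ℂ :=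
  ((List.finRange m).map (fun i => if f i then g i else 1)).prod

/-- Mixed-state stabilizer 2-Rényi entropy
`M̃₂(ρ) = −log₂( Σ_P Tr(ρP)⁴ / Σ_P Tr(ρP)² )`. -/
noncomputable def sre2 {n : ℕ} (ρ : Matrix (Fin n → Fin 2) (Fin n → Fin 2) ℂ) : ℝ :=
  - Real.logb 2 (((∑ P : Fin n → Fin 4, ((ρ * pauliString P).trace) ^ 4) /
      (∑ P : Fin n → Fin 4, ((ρ * pauliString P).trace) ^ 2)).re)

/-! ### Auxiliary lemmas -/

def mIdx : Fin 4 → Fin 4 → Fin 4 :=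
  ![![0,1,2,3],![1,0,3,2],![2,3,0,1],![3,2,1,0]]

noncomputable def mPh : Fin 4 → Fin 4 → ℂ :=
  ![![1,1,1,1],![1,1,Complex.I,-Complex.I],![1,-Complex.I,1,Complex.I],![1,Complex.I,-Complex.I,1]]

lemma pauli1_mul (x y : Fin 4) : pauli1 x * pauli1 y = mPh x y • pauli1 (mIdx x y) := by
  fin_cases x <;> fin_cases y <;>
    · ext i j
      fin_cases i <;> fin_cases j <;>
        simp [pauli1, mPh, mIdx, Matrix.mul_apply, Fin.sum_univ_two, Matrix.one_apply,
          Matrix.vecHead, Matrix.vecTail, Complex.I_mul_I]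

lemma trace_pauli1 (x : Fin 4) : (pauli1 x).trace = if x = 0 then 2 else 0 := by
  fin_cases x <;> simp [pauli1, Matrix.trace, Matrix.diag, Fin.sum_univ_two]

lemma mIdx_self (x : Fin 4) : mIdx x x = 0 := by fin_cases x <;> rfl

lemma mIdx_eq_zero {x y : Fin 4} : mIdx x y = 0 ↔ x = y := by fin_cases x <;> fin_cases y <;> decide

lemma mPh_self (x : Fin 4) : mPh x x = 1 := by fin_cases x <;> rfl

lemma pauliString_one {n : ℕ} : pauliString (fun _ : Fin n => 0) = 1 := by
  ext i j
  simp only [pauliString, Matrix.of_apply]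
  have : ∀ k : Fin n, pauli1 0 (i k) (j k) = if i k = j k then 1 else 0 := fun k => by
    simp [pauli1, Matrix.one_apply]
  rw [Finset.prod_congr rfl (fun k _ => this k), Finset.prod_boole]
  simp [Matrix.one_apply, funext_iff]

lemma pauliString_mul {n : ℕ} (s t : Fin n → Fin 4) :
    pauliString s * pauliString t =
      (∏ k, mPh (s k) (t k)) • pauliString (fun k => mIdx (s k) (t k)) := by
  ext i j
  have h1 : (pauliString s * pauliString t) i j
      = ∑ m : Fin n → Fin 2, ∏ k, (pauli1 (s k) (i k) (m k) * pauli1 (t k) (m k) (j k)) := by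
    simp [pauliString, Matrix.mul_apply, Finset.prod_mul_distrib]
  have h2 : ∑ m : Fin n → Fin 2, ∏ k, (pauli1 (s k) (i k) (m k) * pauli1 (t k) (m k) (j k))
      = ∏ k, ∑ x : Fin 2, pauli1 (s k) (i k) x * pauli1 (t k) x (j k) := by
    rw [Finset.prod_univ_sum]
    rw [Fintype.piFinset_univ]
  rw [h1, h2]
  have h3 : ∀ k : Fin n, (∑ x : Fin 2, pauli1 (s k) (i k) x * pauli1 (t k) x (j k))
      = mPh (s k) (t k) * pauli1 (mIdx (s k) (t k)) (i k) (j k) := by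
    intro k
    have := congrFun (congrFun (pauli1_mul (s k) (t k)) (i k)) (j k)
    simpa [Matrix.mul_apply, Matrix.smul_apply, smul_eq_mul] using this
  simp only [h3, Finset.prod_mul_distrib]
  simp [pauliString, Matrix.smul_apply, smul_eq_mul]

lemma trace_pauliString {n : ℕ} (s : Fin n → Fin 4) :
    (pauliString s).trace = if s = (fun _ => 0) then (2:ℂ)^n else 0 := by
  have h1 : (pauliString s).trace = ∏ k, (pauli1 (s k)).trace := by
    simp only [Matrix.trace, Matrix.diag, pauliString, Matrix.of_apply]
    rw [Finset.prod_univ_sum (fun _ => (univ : Finset (Fin 2)))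
      (fun k x => pauli1 (s k) x x), Fintype.piFinset_univ]
  rw [h1]
  by_cases h : s = fun _ => 0
  · subst h; simp [trace_pauli1]
  · obtain ⟨k, hk⟩ : ∃ k, s k ≠ 0 := by
      by_contra hc; push_neg at hc; exact h (funext hc)
    rw [if_neg h]
    exact Finset.prod_eq_zero (mem_univ k) (by simp [trace_pauli1, hk])

lemma trace_pauliString_mul {n : ℕ} (s t : Fin n → Fin 4) :
    (pauliString s * pauliString t).trace = if s = t then (2:ℂ)^n else 0 := by
  rw [pauliString_mul, Matrix.trace_smul, smul_eq_mul, trace_pauliString]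
  by_cases h : s = t
  · subst h
    have h0 : (fun k => mIdx (s k) (s k)) = (fun _ : Fin n => (0 : Fin 4)) :=
      funext fun k => mIdx_self _
    simp [h0, mPh_self]
  · have h0 : (fun k => mIdx (s k) (t k)) ≠ (fun _ : Fin n => (0 : Fin 4)) := by
      intro hc; exact h (funext fun k => mIdx_eq_zero.mp (congrFun hc k))
    simp [h0, h]

/-- "scaled Pauli" (no constraint on the phase) -/
def Scaled {n : ℕ} (M : Matrix (Fin n → Fin 2) (Fin n → Fin 2) ℂ) : Prop :=
  ∃ (ε : ℂ) (s : Fin n → Fin 4), M = ε • pauliString s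

lemma Scaled.one {n : ℕ} : Scaled (1 : Matrix (Fin n → Fin 2) (Fin n → Fin 2) ℂ) :=
  ⟨1, fun _ => 0, by rw [pauliString_one, one_smul]⟩

lemma Scaled.mul {n : ℕ} {M N : Matrix (Fin n → Fin 2) (Fin n → Fin 2) ℂ}
    (hM : Scaled M) (hN : Scaled N) : Scaled (M * N) := by
  obtain ⟨ε, s, rfl⟩ := hM; obtain ⟨δ, t, rfl⟩ := hN
  refine ⟨ε * δ * ∏ k, mPh (s k) (t k), fun k => mIdx (s k) (t k), ?_⟩
  rw [Matrix.smul_mul, Matrix.mul_smul, pauliString_mul, smul_smul, smul_smul]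

lemma pauliString_sq {n : ℕ} (s : Fin n → Fin 4) : pauliString s * pauliString s = 1 := by
  rw [pauliString_mul]
  have h0 : (fun k => mIdx (s k) (s k)) = (fun _ : Fin n => (0 : Fin 4)) :=
    funext fun k => mIdx_self _
  simp [h0, mPh_self, pauliString_one]

lemma IsPauliPM.sq {n : ℕ} {M : Matrix (Fin n → Fin 2) (Fin n → Fin 2) ℂ}
    (h : IsPauliPM M) : M * M = 1 := by
  obtain ⟨ε, s, hε, rfl⟩ := h
  rw [Matrix.smul_mul, Matrix.mul_smul, smul_smul, pauliString_sq]
  rcases hε with rfl | rfl <;> norm_num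

lemma isPauliPM_of_sq {n : ℕ} {M : Matrix (Fin n → Fin 2) (Fin n → Fin 2) ℂ}
    (h : Scaled M) (hsq : M * M = 1) : IsPauliPM M := by
  obtain ⟨ε, s, rfl⟩ := h
  have h1 : (ε * ε) • (1 : Matrix (Fin n → Fin 2) (Fin n → Fin 2) ℂ) = 1 := by
    rw [Matrix.smul_mul, Matrix.mul_smul, smul_smul, pauliString_sq] at hsq
    exact hsq
  have h2 : ε * ε = 1 := by
    have := congrArg Matrix.trace h1
    rw [Matrix.trace_smul, Matrix.trace_one, smul_eq_mul] at this
    have hcard : (Fintype.card (Fin n → Fin 2) : ℂ) ≠ 0 :=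
      Nat.cast_ne_zero.mpr (by positivity)
    field_simp at this
    linear_combination this
  exact ⟨ε, s, mul_self_eq_one_iff.mp h2, rfl⟩

lemma grpElem_zero {n : ℕ} (g : Fin 0 → Matrix (Fin n → Fin 2) (Fin n → Fin 2) ℂ)
    (f : Fin 0 → Bool) : grpElem g f = 1 := by simp [grpElem]

lemma grpElem_succ {n m : ℕ} (g : Fin (m+1) → Matrix (Fin n → Fin 2) (Fin n → Fin 2) ℂ)
    (f : Fin (m+1) → Bool) :
    grpElem g f = (if f 0 then g 0 else 1) * grpElem (g ∘ Fin.succ) (f ∘ Fin.succ) := by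
  simp [grpElem, List.finRange_succ, List.map_map, Function.comp_def]

lemma grpElem_false {n m : ℕ} (g : Fin m → Matrix (Fin n → Fin 2) (Fin n → Fin 2) ℂ) :
    grpElem g (fun _ => false) = 1 := by
  simp [grpElem]

lemma commute_grpElem {n m : ℕ} {g : Fin m → Matrix (Fin n → Fin 2) (Fin n → Fin 2) ℂ}
    {M : Matrix (Fin n → Fin 2) (Fin n → Fin 2) ℂ} (h : ∀ i, M * g i = g i * M)
    (f : Fin m → Bool) : M * grpElem g f = grpElem g f * M := by
  have : Commute M (grpElem g f) := by
    apply Commute.list_prod_right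
    intro x hx
    simp only [List.mem_map, List.mem_finRange] at hx
    obtain ⟨i, -, rfl⟩ := hx
    by_cases hf : f i
    · simp [hf, Commute, SemiconjBy, h i]
    · simp [hf, Commute.one_right]
  exact this

lemma grpElem_mul {n m : ℕ} (g : Fin m → Matrix (Fin n → Fin 2) (Fin n → Fin 2) ℂ)
    (hc : ∀ i j, g i * g j = g j * g i) (hsq : ∀ i, g i * g i = 1) (f f' : Fin m → Bool) :
    grpElem g f * grpElem g f' = grpElem g (fun i => xor (f i) (f' i)) := by
  induction m with
  | zero => simp [grpElem_zero]
  | succ m ih =>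
    rw [grpElem_succ g f, grpElem_succ g f', grpElem_succ g (fun i => xor (f i) (f' i))]
    have hcomm : (if f' 0 then g 0 else 1) * grpElem (g ∘ Fin.succ) (f ∘ Fin.succ)
        = grpElem (g ∘ Fin.succ) (f ∘ Fin.succ) * (if f' 0 then g 0 else 1) := by
      by_cases hf : f' 0
      · simp only [hf, if_pos]
        exact commute_grpElem (fun i => hc 0 (Fin.succ i) ▸ (hc (Fin.succ i) 0).symm) _
      · simp [hf]
    have hrearr : ((if f 0 then g 0 else 1) * grpElem (g ∘ Fin.succ) (f ∘ Fin.succ)) *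
        ((if f' 0 then g 0 else 1) * grpElem (g ∘ Fin.succ) (f' ∘ Fin.succ))
        = ((if f 0 then g 0 else 1) * (if f' 0 then g 0 else 1)) *
          (grpElem (g ∘ Fin.succ) (f ∘ Fin.succ) * grpElem (g ∘ Fin.succ) (f' ∘ Fin.succ)) := by
      rw [mul_assoc, ← mul_assoc (grpElem (g ∘ Fin.succ) (f ∘ Fin.succ)), ← hcomm]
      simp only [mul_assoc]
    rw [hrearr, ih (g ∘ Fin.succ) (fun i j => hc _ _) (fun i => hsq _)]
    have h0 : (if f 0 then g 0 else 1) * (if f' 0 then g 0 else 1)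
        = (if xor (f 0) (f' 0) then g 0 else 1) := by
      by_cases h1 : f 0 <;> by_cases h2 : f' 0 <;> simp [h1, h2, hsq 0]
    rw [h0]
    rfl

lemma grpElem_scaled {n m : ℕ} {g : Fin m → Matrix (Fin n → Fin 2) (Fin n → Fin 2) ℂ}
    (hg : ∀ i, IsPauliPM (g i)) (f : Fin m → Bool) : Scaled (grpElem g f) := by
  induction m with
  | zero => rw [grpElem_zero]; exact Scaled.one
  | succ m ih =>
    rw [grpElem_succ]
    refine Scaled.mul ?_ (ih (fun i => hg _) _)
    by_cases hf : f 0
    · simp only [hf, if_pos]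
      obtain ⟨ε, s, -, h⟩ := hg 0
      exact ⟨ε, s, h⟩
    · simp only [hf, if_neg, Bool.false_eq_true, not_false_iff]
      exact Scaled.one

lemma prod_one_add {n m : ℕ} (g : Fin m → Matrix (Fin n → Fin 2) (Fin n → Fin 2) ℂ) :
    ((List.finRange m).map (fun i => 1 + g i)).prod = ∑ f : Fin m → Bool, grpElem g f := by
  induction m with
  | zero =>
    simp [grpElem_zero]
  | succ m ih =>
    rw [List.finRange_succ, List.map_cons, List.prod_cons, List.map_map]
    have hl : ((List.finRange m).map ((fun i => 1 + g i) ∘ Fin.succ)).prod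
        = ∑ f : Fin m → Bool, grpElem (g ∘ Fin.succ) f := ih (g ∘ Fin.succ)
    rw [hl]
    have hre : ∑ f : Fin (m+1) → Bool, grpElem g f
        = ∑ p : Bool × (Fin m → Bool), grpElem g (Fin.cons p.1 p.2) :=
      (Fintype.sum_equiv (Fin.consEquiv (fun _ => Bool)) _ _ (fun p => rfl)).symm
    rw [hre, Fintype.sum_prod_type, Fintype.sum_bool]
    have hcons : ∀ (b : Bool) (f : Fin m → Bool),
        grpElem g (Fin.cons b f) = (if b then g 0 else 1) * grpElem (g ∘ Fin.succ) f := by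
      intro b f
      have h1 : (Fin.cons b f : Fin (m+1) → Bool) ∘ Fin.succ = f :=
        funext fun i => by simp
      rw [grpElem_succ, h1, Fin.cons_zero]
    simp only [hcons]
    simp only [if_pos, if_neg, Bool.false_eq_true, not_false_iff, one_mul, add_mul,
      Finset.mul_sum]
    rw [Finset.sum_add_distrib, add_comm]


/-- bipartite magic gauge, case only `Z̄` survives: for the reduced state
`σ_A = 2^{-|A|}(I + Z̄_A/√2)∏ᵢ(I + aᵢ)` with `Z̄_A` a Hermitian Pauli commuting with the
independent commuting generators `aᵢ` and not in `±⟨aᵢ⟩`, one has `M̃₂(σ_A) = log₂(6/5)`. -/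
theorem stmt_11 {q k : ℕ}
    (a : Fin k → Matrix (Fin q → Fin 2) (Fin q → Fin 2) ℂ)
    (Zb : Matrix (Fin q → Fin 2) (Fin q → Fin 2) ℂ)
    (ha : ∀ i, IsPauliPM (a i))
    (hcomm : ∀ i i', a i * a i' = a i' * a i)
    (hindep : ∀ f f' : Fin k → Bool, grpElem a f = grpElem a f' → f = f')
    (hnoNegI : ∀ f : Fin k → Bool, grpElem a f ≠ -1)
    (hZb : IsPauliPM Zb)
    (hZcomm : ∀ i, Zb * a i = a i * Zb)
    (hZnot : ∀ (f : Fin k → Bool) (ε : ℂ), (ε = 1 ∨ ε = -1) → Zb ≠ ε • grpElem a f)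
    (σA : Matrix (Fin q → Fin 2) (Fin q → Fin 2) ℂ)
    (hσA : σA = ((1 : ℂ)/2 ^ q) •
      ((1 + ((Real.sqrt 2 : ℂ))⁻¹ • Zb) *
        ((List.finRange k).map (fun i => 1 + a i)).prod)) :
    sre2 σA = Real.logb 2 (6 / 5) := by
  classical
  set r : ℂ := ((Real.sqrt 2 : ℂ))⁻¹ with hr_def
  have h2q : (2:ℂ)^q ≠ 0 := pow_ne_zero q two_ne_zero
  have hsq_a : ∀ i, a i * a i = 1 := fun i => (ha i).sq
  have hGmul := grpElem_mul a hcomm hsq_a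
  have hxorself : ∀ f : Fin k → Bool, (fun i => xor (f i) (f i)) = (fun _ => false) :=
    fun f => funext fun i => Bool.xor_self (f i)
  have hGsq : ∀ f, grpElem a f * grpElem a f = 1 := fun f => by
    rw [hGmul f f, hxorself f, grpElem_false]
  have hG_pm : ∀ f, IsPauliPM (grpElem a f) :=
    fun f => isPauliPM_of_sq (grpElem_scaled ha f) (hGsq f)
  have hZsq : Zb * Zb = 1 := hZb.sq
  have hZG : ∀ f, Zb * grpElem a f = grpElem a f * Zb := fun f => commute_grpElem hZcomm f
  have hZG_pm : ∀ f, IsPauliPM (Zb * grpElem a f) := by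
    intro f
    refine isPauliPM_of_sq (Scaled.mul ⟨hZb.choose, hZb.choose_spec.choose,
      hZb.choose_spec.choose_spec.2⟩ (grpElem_scaled ha f)) ?_
    have hcom : Commute (grpElem a f) Zb := (hZG f).symm
    rw [hcom.mul_mul_mul_comm Zb (grpElem a f), hZsq, hGsq, one_mul]
  -- choose Pauli representations
  choose ε s hrep using hG_pm
  choose η u hrepZ using hZG_pm
  have hε : ∀ f, ε f = 1 ∨ ε f = -1 := fun f => (hrep f).1
  have hsrep : ∀ f, grpElem a f = ε f • pauliString (s f) := fun f => (hrep f).2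
  have hη : ∀ f, η f = 1 ∨ η f = -1 := fun f => (hrepZ f).1
  have hurep : ∀ f, Zb * grpElem a f = η f • pauliString (u f) := fun f => (hrepZ f).2
  have hε2 : ∀ f, ε f * ε f = 1 := fun f => by rcases hε f with h | h <;> rw [h] <;> norm_num
  have hη2 : ∀ f, η f * η f = 1 := fun f => by rcases hη f with h | h <;> rw [h] <;> norm_num
  have hPs : ∀ f, pauliString (s f) = ε f • grpElem a f := by
    intro f
    rw [hsrep f, smul_smul, hε2 f, one_smul]
  have hPu : ∀ f, pauliString (u f) = η f • (Zb * grpElem a f) := by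
    intro f
    rw [hurep f, smul_smul, hη2 f, one_smul]
  -- key uniqueness lemma
  have hkey : ∀ (f f' : Fin k → Bool) (c : ℂ), (c = 1 ∨ c = -1) →
      grpElem a f = c • grpElem a f' → f = f' := by
    intro f f' c hc hEq
    have h1 : grpElem a (fun i => xor (f i) (f' i)) = c • 1 := by
      rw [← hGmul f f', hEq, Matrix.smul_mul, hGsq f']
    rcases hc with rfl | rfl
    · rw [one_smul] at h1
      have h2 := hindep (fun i => xor (f i) (f' i)) (fun _ => false)
        (by rw [h1, grpElem_false])
      funext i
      have h3 := congrFun h2 i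
      revert h3
      cases f i <;> cases f' i <;> simp
    · exfalso
      exact hnoNegI (fun i => xor (f i) (f' i)) (by rw [h1]; simp)
  have hpm_mul : ∀ (c d : ℂ), (c = 1 ∨ c = -1) → (d = 1 ∨ d = -1) →
      (c * d = 1 ∨ c * d = -1) := by
    rintro c d (rfl | rfl) (rfl | rfl) <;> norm_num
  -- injectivity of s
  have hs_inj : Function.Injective s := by
    intro f f' hss
    refine hkey f f' (ε f * ε f') (hpm_mul _ _ (hε f) (hε f')) ?_
    rw [hsrep f, hss, hPs f', smul_smul]
  -- injectivity of u
  have hu_inj : Function.Injective u := by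
    intro f f' huu
    refine hkey f f' (η f * η f') (hpm_mul _ _ (hη f) (hη f')) ?_
    have h1 : Zb * grpElem a f = (η f * η f') • (Zb * grpElem a f') := by
      rw [hurep f, huu, hPu f', smul_smul]
    have h2 := congrArg (fun M => Zb * M) h1
    simp only [Matrix.mul_smul] at h2
    rw [← mul_assoc, ← mul_assoc, hZsq, one_mul, one_mul] at h2
    exact h2
  -- disjointness
  have hne : ∀ f f', u f ≠ s f' := by
    intro f f' hEq
    have h1 : Zb * grpElem a f = (η f * ε f') • grpElem a f' := by
      rw [hurep f, hEq, hPs f', smul_smul]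
    have h2 : Zb = (η f * ε f') • grpElem a (fun i => xor (f' i) (f i)) := by
      have h3 := congrArg (fun M => M * grpElem a f) h1
      simp only [Matrix.smul_mul] at h3
      rw [mul_assoc, hGsq f, mul_one, hGmul f' f] at h3
      exact h3
    exact hZnot _ _ (hpm_mul _ _ (hη f) (hε f')) h2
  -- expansion of σA as a sum of scaled Pauli strings
  have hσ : σA = (∑ f : Fin k → Bool, (((1:ℂ)/2^q) * ε f) • pauliString (s f))
      + ∑ f : Fin k → Bool, (((1:ℂ)/2^q) * (r * η f)) • pauliString (u f) := by
    rw [hσA, prod_one_add a]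
    rw [add_mul, one_mul, Matrix.smul_mul, Finset.mul_sum, smul_add, Finset.smul_sum,
      Finset.smul_sum]
    congr 1
    · refine Finset.sum_congr rfl fun f _ => ?_
      rw [hsrep f, smul_smul]
    · rw [Finset.smul_sum]
      refine Finset.sum_congr rfl fun f _ => ?_
      rw [hurep f, smul_smul, smul_smul, mul_assoc]
  -- trace of σA against a Pauli string
  have hTr : ∀ t : Fin q → Fin 4, (σA * pauliString t).trace
      = (∑ f : Fin k → Bool, if s f = t then ε f else 0)
        + ∑ f : Fin k → Bool, if u f = t then r * η f else 0 := by
    intro t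
    rw [hσ, Matrix.add_mul, Matrix.trace_add]
    simp only [Finset.sum_mul, Matrix.trace_sum]
    congr 1
    · refine Finset.sum_congr rfl fun f _ => ?_
      rw [Matrix.smul_mul, Matrix.trace_smul, trace_pauliString_mul, smul_eq_mul, mul_ite,
        mul_zero]
      by_cases h : s f = t
      · rw [if_pos h, if_pos h]
        field_simp
      · rw [if_neg h, if_neg h]
    · refine Finset.sum_congr rfl fun f _ => ?_
      rw [Matrix.smul_mul, Matrix.trace_smul, trace_pauliString_mul, smul_eq_mul, mul_ite,
        mul_zero]
      by_cases h : u f = t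
      · rw [if_pos h, if_pos h]
        field_simp
      · rw [if_neg h, if_neg h]
  -- values of the trace
  have hT1 : ∀ f0, (σA * pauliString (s f0)).trace = ε f0 := by
    intro f0
    rw [hTr]
    have e1 : (∑ f : Fin k → Bool, if s f = s f0 then ε f else 0) = ε f0 := by
      rw [Finset.sum_congr rfl (fun f _ => if_congr hs_inj.eq_iff rfl rfl)]
      simp
    have e2 : (∑ f : Fin k → Bool, if u f = s f0 then r * η f else 0) = 0 :=
      Finset.sum_eq_zero fun f _ => if_neg (hne f f0)
    rw [e1, e2, add_zero]
  have hT2 : ∀ f0, (σA * pauliString (u f0)).trace = r * η f0 := by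
    intro f0
    rw [hTr]
    have e1 : (∑ f : Fin k → Bool, if s f = u f0 then ε f else 0) = 0 :=
      Finset.sum_eq_zero fun f _ => if_neg fun h => hne f0 f h.symm
    have e2 : (∑ f : Fin k → Bool, if u f = u f0 then r * η f else 0) = r * η f0 := by
      rw [Finset.sum_congr rfl (fun f _ => if_congr hu_inj.eq_iff rfl rfl)]
      simp
    rw [e1, e2, zero_add]
  have hT0 : ∀ t, t ∉ (univ.image s ∪ univ.image u) → (σA * pauliString t).trace = 0 := by
    intro t ht
    rw [Finset.mem_union, not_or] at ht
    rw [hTr]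
    have e1 : (∑ f : Fin k → Bool, if s f = t then ε f else 0) = 0 :=
      Finset.sum_eq_zero fun f _ => if_neg fun h => ht.1 (Finset.mem_image.mpr ⟨f, mem_univ f, h⟩)
    have e2 : (∑ f : Fin k → Bool, if u f = t then r * η f else 0) = 0 :=
      Finset.sum_eq_zero fun f _ => if_neg fun h => ht.2 (Finset.mem_image.mpr ⟨f, mem_univ f, h⟩)
    rw [e1, e2, add_zero]
  -- disjointness of the two images
  have hdisj : Disjoint (univ.image s) (univ.image u) := by
    rw [Finset.disjoint_left]
    intro t hts htu
    obtain ⟨f, -, rfl⟩ := Finset.mem_image.mp hts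
    obtain ⟨f', -, h⟩ := Finset.mem_image.mp htu
    exact hne f' f h
  -- the sums of powers of traces
  have hsum : ∀ p : ℕ, p ≠ 0 → ∑ t : Fin q → Fin 4, ((σA * pauliString t).trace)^p
      = (∑ f : Fin k → Bool, (ε f)^p) + ∑ f : Fin k → Bool, (r * η f)^p := by
    intro p hp
    rw [← Finset.sum_subset (Finset.subset_univ (univ.image s ∪ univ.image u))
      (fun t _ ht => by rw [hT0 t ht]; exact zero_pow hp)]
    rw [Finset.sum_union hdisj, Finset.sum_image (fun x _ y _ h => hs_inj h),
      Finset.sum_image (fun x _ y _ h => hu_inj h)]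
    congr 1
    · exact Finset.sum_congr rfl fun f _ => by rw [hT1]
    · exact Finset.sum_congr rfl fun f _ => by rw [hT2]
  -- numeric values of the phases
  have hr2 : r^2 = 1/2 := by
    rw [hr_def, inv_pow, ← Complex.ofReal_pow, Real.sq_sqrt (by norm_num : (0:ℝ) ≤ 2)]
    norm_num
  have hr4 : r^4 = 1/4 := by
    have h : r^4 = (r^2)^2 := by ring
    rw [h, hr2]; norm_num
  have hcardn : Fintype.card (Fin k → Bool) = 2^k := by simp [Fintype.card_fun]
  have hsum2 : ∑ t : Fin q → Fin 4, ((σA * pauliString t).trace)^2 = (2:ℂ)^k * (3/2) := by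
    rw [hsum 2 two_ne_zero]
    have e1 : ∀ f ∈ (univ : Finset (Fin k → Bool)), (ε f)^2 = 1 := fun f _ => by
      rcases hε f with h | h <;> rw [h] <;> norm_num
    have e2 : ∀ f ∈ (univ : Finset (Fin k → Bool)), (r * η f)^2 = 1/2 := fun f _ => by
      rw [mul_pow]
      rcases hη f with h | h <;> rw [h, hr2] <;> norm_num
    rw [Finset.sum_congr rfl e1, Finset.sum_congr rfl e2, Finset.sum_const, Finset.sum_const,
      Finset.card_univ, hcardn]
    push_cast
    ring
  have hsum4 : ∑ t : Fin q → Fin 4, ((σA * pauliString t).trace)^4 = (2:ℂ)^k * (5/4) := by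
    rw [hsum 4 (by norm_num)]
    have e1 : ∀ f ∈ (univ : Finset (Fin k → Bool)), (ε f)^4 = 1 := fun f _ => by
      rcases hε f with h | h <;> rw [h] <;> norm_num
    have e2 : ∀ f ∈ (univ : Finset (Fin k → Bool)), (r * η f)^4 = 1/4 := fun f _ => by
      rw [mul_pow]
      rcases hη f with h | h <;> rw [h, hr4] <;> norm_num
    rw [Finset.sum_congr rfl e1, Finset.sum_congr rfl e2, Finset.sum_const, Finset.sum_const,
      Finset.card_univ, hcardn]
    push_cast
    ring
  -- final computation
  unfold sre2
  rw [hsum2, hsum4]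
  have hratio : ((2:ℂ)^k * (5/4)) / ((2:ℂ)^k * (3/2)) = 5/6 := by
    rw [mul_div_mul_left _ _ (pow_ne_zero k (two_ne_zero : (2:ℂ) ≠ 0))]
    norm_num
  rw [hratio]
  have hre : ((5/6 : ℂ)).re = (5/6 : ℝ) := by
    rw [show (5/6:ℂ) = ((5/6:ℝ):ℂ) by push_cast; ring, Complex.ofReal_re]
  rw [hre, show (5/6:ℝ) = (6/5)⁻¹ by norm_num, Real.logb_inv, neg_neg]
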